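/- Let n ≥ 2 and p_1,...,p_n ∈ ℝ^d in good position, with b_i = |p_i - p_{i+1}| and a_i = b_i²/(4 b_{i+1}²). Let R_n be the circumradius of p_1,...,p_n. Then R_n² = (b_{n-1}²/4) / (1 - a_{n-2}/(1 - a_{n-3}/(⋯ - a_2/(1 - a_1)))). Equivalently, R_n² = (b_{n-1}²/4) · F^{(n-3)}(a_1,...,a_{n-3}) / F^{(n-2)}(a_1,...,a_{n-2}). -/

import Mathlib

/-- `GoodPosition p a n`: the points `p a, ..., p (a+n-1)` of `ℝ^d` are affinely
independent and each point is equidistant from all earlier ones. -/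
def GoodPosition {d : ℕ} (p : ℕ → EuclideanSpace ℝ (Fin d)) (a n : ℕ) : Prop :=
  AffineIndependent ℝ (fun i : Fin n => p (a + i)) ∧
  ∀ i j k : ℕ, i < n → j < i → k < i →
    dist (p (a + j)) (p (a + i)) = dist (p (a + k)) (p (a + i))

/-- The polynomial `F^{(n)}`, defined by the recurrence
`F^{(n)}(x_1,...,x_n) = F^{(n-1)}(x_1,...,x_{n-1}) - x_n F^{(n-2)}(x_1,...,x_{n-2})`
with `F^{(0)} = F^{(-1)} = 1`. -/
def Frec : ℕ → (ℕ → ℝ) → ℝ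
  | 0, _ => 1
  | 1, x => 1 - x 1
  | (n + 2), x => Frec (n + 1) x - x (n + 2) * Frec n x

lemma Frec_succ (m : ℕ) (x : ℕ → ℝ) :
    Frec (m + 1) x = Frec m x - x (m + 1) * Frec (m - 1) x := by
  match m with
  | 0 => simp [Frec]
  | k + 1 => rfl

lemma sq_dist_eq {a b : ℝ} (ha : 0 ≤ a) (hb : 0 ≤ b) (h : a * a = b * b) : a = b := by
  have h2 : a ^ 2 = b ^ 2 := by rw [pow_two, pow_two]; exact h
  exact (sq_eq_sq₀ ha hb).mp h2

lemma exists_center {d m : ℕ} (p : ℕ → EuclideanSpace ℝ (Fin d))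
    (hindep : AffineIndependent ℝ (fun i : Fin (m + 2) => p (1 + ↑i))) :
    ∃ c ∈ affineSpan ℝ (p '' Set.Icc 1 (m + 2)),
      (∀ i, 1 ≤ i → i ≤ m + 2 → dist c (p i) = dist c (p 1)) ∧
      ∀ x ∈ affineSpan ℝ (p '' Set.Icc 1 (m + 2)),
        (∀ i, 1 ≤ i → i ≤ m + 2 → dist x (p i) = dist x (p 1)) → x = c := by
  have hrange : Set.range (fun i : Fin (m + 2) => p (1 + ↑i)) = p '' Set.Icc 1 (m + 2) := by
    ext y
    constructor
    · rintro ⟨i, rfl⟩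
      exact ⟨1 + ↑i, ⟨by omega, by have := i.isLt; omega⟩, rfl⟩
    · rintro ⟨x, ⟨hx1, hx2⟩, rfl⟩
      refine ⟨⟨x - 1, by omega⟩, ?_⟩
      show p (1 + (x - 1)) = p x
      rw [show 1 + (x - 1) = x by omega]
  let S : Affine.Simplex ℝ (EuclideanSpace ℝ (Fin d)) (m + 1) := ⟨_, hindep⟩
  have hS : S.points = fun i : Fin (m + 2) => p (1 + ↑i) := rfl
  have hrange' : Set.range S.points = p '' Set.Icc 1 (m + 2) := hrange
  have hgen : ∀ i, 1 ≤ i → i ≤ m + 2 → dist S.circumcenter (p i) = S.circumradius := by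
    intro i h1 h2
    have hi := S.dist_circumcenter_eq_circumradius' ⟨i - 1, by omega⟩
    simp only [hS] at hi
    have he : 1 + ((⟨i - 1, by omega⟩ : Fin (m + 2)) : ℕ) = i := by
      show 1 + (i - 1) = i
      omega
    rw [he] at hi
    exact hi
  refine ⟨S.circumcenter, ?_, ?_, ?_⟩
  · have := S.circumcenter_mem_affineSpan
    rwa [hrange'] at this
  · intro i h1 h2
    rw [hgen i h1 h2, hgen 1 le_rfl (by omega)]
  · intro x hx hdist
    rw [← hrange'] at hx
    refine Affine.Simplex.eq_circumcenter_of_dist_eq (s := S) hx (r := dist x (p 1)) ?_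
    intro j
    have hj1 : (1 : ℕ) ≤ 1 + ↑j := Nat.le_add_right 1 ↑j
    have hj2 : 1 + (j : ℕ) ≤ m + 2 := by have := j.isLt; omega
    have hj := hdist (1 + (j : ℕ)) hj1 hj2
    rw [hS]
    rw [dist_comm]
    exact hj

lemma key {d : ℕ} (m : ℕ) (p : ℕ → EuclideanSpace ℝ (Fin d)) :
    ∀ (Q : EuclideanSpace ℝ (Fin d)) (R : ℝ),
      GoodPosition p 1 (m + 2) → Q ∈ affineSpan ℝ (p '' Set.Icc 1 (m + 2)) →
      (∀ i, 1 ≤ i → i ≤ m + 2 → dist Q (p i) = R) →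
      0 < Frec m (fun i => dist (p i) (p (i + 1)) ^ 2 / (4 * dist (p (i + 1)) (p (i + 2)) ^ 2)) ∧
      R ^ 2 * Frec m (fun i => dist (p i) (p (i + 1)) ^ 2 / (4 * dist (p (i + 1)) (p (i + 2)) ^ 2)) =
        dist (p (m + 1)) (p (m + 2)) ^ 2 / 4 *
          Frec (m - 1) (fun i => dist (p i) (p (i + 1)) ^ 2 / (4 * dist (p (i + 1)) (p (i + 2)) ^ 2)) := by
  induction m with
  | zero =>
    intro Q R hgood hQ hR
    have hS12 : p '' Set.Icc 1 2 = insert (p 1) {p 2} := by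
      rw [show Set.Icc 1 2 = ({1, 2} : Set ℕ) from by ext x; simp [Set.mem_Icc]; omega]
      simp [Set.image_insert_eq]
    rw [hS12] at hQ
    rw [← affineSpan_insert_affineSpan] at hQ
    rw [AffineSubspace.mem_affineSpan_insert_iff (mem_affineSpan ℝ (Set.mem_singleton (p 2)))] at hQ
    obtain ⟨r, p0, hp0, rfl⟩ := hQ
    rw [AffineSubspace.mem_affineSpan_singleton] at hp0
    subst hp0
    have hne : p 1 ≠ p 2 := by
      intro h
      have h01 := hgood.1.injective
        (show (fun i : Fin (0 + 2) => p (1 + (i : ℕ))) 0 = (fun i : Fin (0 + 2) => p (1 + (i : ℕ))) 1 from h)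
      exact absurd h01 (by decide)
    have hb : dist (p 1) (p 2) ≠ 0 := dist_ne_zero.mpr hne
    have hd2 : dist (r • (p 1 -ᵥ p 2) +ᵥ p 2) (p 2) = |r| * dist (p 1) (p 2) := by
      rw [dist_eq_norm_vsub (EuclideanSpace ℝ (Fin d)), vadd_vsub, norm_smul,
        Real.norm_eq_abs, ← dist_eq_norm_vsub (EuclideanSpace ℝ (Fin d))]
    have hd1 : dist (r • (p 1 -ᵥ p 2) +ᵥ p 2) (p 1) = |r - 1| * dist (p 1) (p 2) := by
      rw [dist_eq_norm_vsub (EuclideanSpace ℝ (Fin d)), vadd_vsub_assoc,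
        show r • (p 1 -ᵥ p 2) + (p 2 -ᵥ p 1) = (r - 1) • (p 1 -ᵥ p 2) by
          rw [sub_smul, one_smul, ← neg_vsub_eq_vsub_rev (p 1) (p 2), sub_eq_add_neg],
        norm_smul, Real.norm_eq_abs, ← dist_eq_norm_vsub (EuclideanSpace ℝ (Fin d))]
    have e1 : R ^ 2 = r ^ 2 * dist (p 1) (p 2) ^ 2 := by
      rw [← hR 2 (by omega) (by omega), hd2, mul_pow, sq_abs]
    have e2 : R ^ 2 = (r - 1) ^ 2 * dist (p 1) (p 2) ^ 2 := by
      rw [← hR 1 (by omega) (by omega), hd1, mul_pow, sq_abs]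
    have hr2 : (2 * r - 1) * dist (p 1) (p 2) ^ 2 = 0 := by linear_combination e2 - e1
    have hr : r = 1 / 2 := by
      rcases mul_eq_zero.mp hr2 with h | h
      · linarith
      · exact absurd h (pow_ne_zero _ hb)
    subst hr
    constructor
    · norm_num [Frec]
    · simp only [Frec, Nat.zero_sub]
      rw [e1]
      ring
  | succ m ih =>
    intro Q R hgood hQ hR
    have hRnn : 0 ≤ R := hR 1 (by omega) (by omega) ▸ dist_nonneg
    have hindep : AffineIndependent ℝ (fun i : Fin (m + 2) => p (1 + ↑i)) := by
      have h := hgood.1.comp_embedding (Fin.castLEEmb (by omega : m + 2 ≤ m + 3))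
      exact h
    have hgood' : GoodPosition p 1 (m + 2) :=
      ⟨hindep, fun i j k hi hj hk => hgood.2 i j k (by omega) hj hk⟩
    obtain ⟨c, hcmem, hceq, hcuniq⟩ := exists_center p hindep
    obtain ⟨hFpos, hFeq⟩ := ih c (dist c (p 1)) hgood' hcmem hceq
    have hmem : ∀ i : ℕ, 1 ≤ i → i ≤ m + 2 → p i ∈ affineSpan ℝ (p '' Set.Icc 1 (m + 2)) :=
      fun i h1 h2 => subset_affineSpan ℝ _ ⟨i, ⟨h1, h2⟩, rfl⟩
    haveI : Nonempty (affineSpan ℝ (p '' Set.Icc 1 (m + 2))) := ⟨⟨p 1, hmem 1 le_rfl (by omega)⟩⟩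
    -- all first m+2 points are at the same distance from the apex p (m+3)
    have hBdist : ∀ i, 1 ≤ i → i ≤ m + 2 →
        dist (p i) (p (m + 3)) = dist (p (m + 2)) (p (m + 3)) := by
      intro i h1 h2
      have h := hgood.2 (m + 2) (i - 1) (m + 1) (by omega) (by omega) (by omega)
      rw [show 1 + (i - 1) = i by omega, show 1 + (m + 2) = m + 3 by omega,
        show 1 + (m + 1) = m + 2 by omega] at h
      exact h
    -- the orthogonal projection of the apex onto the span of the first m+2 points
    have hpyth := fun (i : ℕ) (h1 : 1 ≤ i) (h2 : i ≤ m + 2) =>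
      EuclideanGeometry.dist_sq_eq_dist_orthogonalProjection_sq_add_dist_orthogonalProjection_sq
        (s := affineSpan ℝ (p '' Set.Icc 1 (m + 2))) (p (m + 3)) (hmem i h1 h2)
    have hc3eq : ∀ i, 1 ≤ i → i ≤ m + 2 →
        dist (↑(EuclideanGeometry.orthogonalProjection (affineSpan ℝ (p '' Set.Icc 1 (m + 2)))
          (p (m + 3)))) (p i) =
        dist (↑(EuclideanGeometry.orthogonalProjection (affineSpan ℝ (p '' Set.Icc 1 (m + 2)))
          (p (m + 3)))) (p 1) := by
      intro i h1 h2
      have ha := hpyth i h1 h2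
      have hb' := hpyth 1 le_rfl (by omega)
      rw [hBdist i h1 h2] at ha
      rw [hBdist 1 le_rfl (by omega)] at hb'
      rw [dist_comm _ (p i), dist_comm _ (p 1)]
      exact sq_dist_eq dist_nonneg dist_nonneg (by linarith)
    have hc3mem := EuclideanGeometry.orthogonalProjection_mem
      (s := affineSpan ℝ (p '' Set.Icc 1 (m + 2))) (p (m + 3))
    have hc3c : (↑(EuclideanGeometry.orthogonalProjection (affineSpan ℝ (p '' Set.Icc 1 (m + 2)))
        (p (m + 3))) : EuclideanSpace ℝ (Fin d)) = c := hcuniq _ hc3mem hc3eq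
    have hv : p (m + 3) -ᵥ c ∈ (affineSpan ℝ (p '' Set.Icc 1 (m + 2))).directionᗮ := by
      have := EuclideanGeometry.vsub_orthogonalProjection_mem_direction_orthogonal
        (affineSpan ℝ (p '' Set.Icc 1 (m + 2))) (p (m + 3))
      rwa [hc3c] at this
    -- decompose Q
    have hins : p '' Set.Icc 1 (m + 3) = insert (p (m + 3)) (p '' Set.Icc 1 (m + 2)) := by
      rw [show Set.Icc 1 (m + 3) = insert (m + 3) (Set.Icc 1 (m + 2)) from by
        ext x; simp [Set.mem_Icc]; omega]
      rw [Set.image_insert_eq]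
    rw [show m + 1 + 2 = m + 3 from rfl, hins, ← affineSpan_insert_affineSpan,
      AffineSubspace.mem_affineSpan_insert_iff hcmem] at hQ
    obtain ⟨r, p0, hp0, hQeq⟩ := hQ
    -- distances from Q to the base points
    have hzi : ∀ i, 1 ≤ i → i ≤ m + 2 →
        R * R = dist p0 (p i) * dist p0 (p i) +
          (r - 0) * (r - 0) * (‖p (m + 3) -ᵥ c‖ * ‖p (m + 3) -ᵥ c‖) := by
      intro i h1 h2
      have h := EuclideanGeometry.dist_sq_smul_orthogonal_vadd_smul_orthogonal_vadd
        hp0 (hmem i h1 h2) r 0 hv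
      rw [zero_smul, zero_vadd, ← hQeq] at h
      rw [Real.norm_eq_abs, abs_mul_abs_self] at h
      rw [← hR i h1 (by omega)]
      exact h
    -- p0 is equidistant from the base points, hence p0 = c
    have hp0eq : ∀ i, 1 ≤ i → i ≤ m + 2 → dist p0 (p i) = dist p0 (p 1) := by
      intro i h1 h2
      have ha := hzi i h1 h2
      have hb' := hzi 1 le_rfl (by omega)
      exact sq_dist_eq dist_nonneg dist_nonneg (by linarith)
    have hp0c : p0 = c := hcuniq p0 hp0 hp0eq
    rw [hp0c] at hQeq hzi
    -- distance from Q to the apex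
    have happx : R * R = (r - 1) * (r - 1) * (‖p (m + 3) -ᵥ c‖ * ‖p (m + 3) -ᵥ c‖) := by
      have h := EuclideanGeometry.dist_sq_smul_orthogonal_vadd_smul_orthogonal_vadd
        hcmem hcmem r 1 hv
      rw [one_smul, vsub_vadd, ← hQeq, dist_self, Real.norm_eq_abs, abs_mul_abs_self] at h
      rw [← hR (m + 3) (by omega) (by omega)]
      linarith [h]
    -- scalar identities
    have hdv : dist (p (m + 3)) c = ‖p (m + 3) -ᵥ c‖ :=
      dist_eq_norm_vsub (EuclideanSpace ℝ (Fin d)) _ _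
    have e1 : R ^ 2 = dist c (p 1) ^ 2 + r ^ 2 * dist (p (m + 3)) c ^ 2 := by
      linear_combination hzi 1 le_rfl (by omega) -
        r ^ 2 * (dist (p (m + 3)) c + ‖p (m + 3) -ᵥ c‖) * hdv
    have e2 : R ^ 2 = (r - 1) ^ 2 * dist (p (m + 3)) c ^ 2 := by
      linear_combination happx -
        (r - 1) ^ 2 * (dist (p (m + 3)) c + ‖p (m + 3) -ᵥ c‖) * hdv
    have hB2 : dist (p (m + 2)) (p (m + 3)) ^ 2 = dist c (p 1) ^ 2 + dist (p (m + 3)) c ^ 2 := by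
      have ha := hpyth (m + 2) (by omega) le_rfl
      rw [hc3c] at ha
      have hd2 : dist (p (m + 2)) c = dist c (p 1) := by
        rw [dist_comm]
        exact hceq (m + 2) (by omega) le_rfl
      rw [hd2] at ha
      linear_combination ha
    -- the apex is not in the base span
    have hnotmem : p (m + 3) ∉ affineSpan ℝ (p '' Set.Icc 1 (m + 2)) := by
      have h := hgood.1.notMem_affineSpan_diff (Fin.last (m + 2)) Set.univ
      have hseteq : (fun i : Fin (m + 3) => p (1 + ↑i)) '' (Set.univ \ {Fin.last (m + 2)}) =
          p '' Set.Icc 1 (m + 2) := by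
        ext y
        constructor
        · rintro ⟨i, ⟨-, hi⟩, rfl⟩
          have hlt : (i : ℕ) < m + 2 := by
            rcases Nat.lt_or_ge (i : ℕ) (m + 2) with h' | h'
            · exact h'
            · exact absurd (Fin.ext (show (i : ℕ) = ((Fin.last (m + 2)) : ℕ) by
                rw [Fin.val_last]; have := i.isLt; omega)) hi
          exact ⟨1 + ↑i, ⟨by omega, by omega⟩, rfl⟩
        · rintro ⟨x, ⟨hx1, hx2⟩, rfl⟩
          refine ⟨⟨x - 1, by omega⟩, ⟨Set.mem_univ _, ?_⟩, ?_⟩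
          · intro hcon
            have := congrArg Fin.val hcon
            simp [Fin.last] at this
            omega
          · show p (1 + (x - 1)) = p x
            rw [show 1 + (x - 1) = x by omega]
      rw [hseteq] at h
      have h2 : p (1 + ((Fin.last (m + 2)) : ℕ)) ∉ affineSpan ℝ (p '' Set.Icc 1 (m + 2)) := h
      rwa [show 1 + ((Fin.last (m + 2)) : ℕ) = m + 3 from by rw [Fin.val_last]; omega] at h2
    have hvnorm : 0 < dist (p (m + 3)) c :=
      dist_pos.mpr (fun hcon => hnotmem (hcon ▸ hcmem))
    have hh2pos : 0 < dist (p (m + 3)) c ^ 2 := pow_pos hvnorm 2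
    have hBpos : 0 < dist (p (m + 2)) (p (m + 3)) ^ 2 := by
      nlinarith [sq_nonneg (dist c (p 1))]
    have hBne : dist (p (m + 2)) (p (m + 3)) ^ 2 ≠ 0 := ne_of_gt hBpos
    have hBne' : dist (p (m + 2)) (p (m + 3)) ≠ 0 := fun h => hBne (by rw [h]; norm_num)
    -- key quartic identity
    have hkey : 4 * R ^ 2 * dist (p (m + 3)) c ^ 2 =
        dist (p (m + 2)) (p (m + 3)) ^ 2 * dist (p (m + 2)) (p (m + 3)) ^ 2 := by
      have er : dist c (p 1) ^ 2 = dist (p (m + 3)) c ^ 2 * (1 - 2 * r) := by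
        linear_combination e2 - e1
      have eb : dist (p (m + 2)) (p (m + 3)) ^ 2 = dist (p (m + 3)) c ^ 2 * (2 - 2 * r) := by
        linear_combination hB2 + er
      linear_combination 4 * dist (p (m + 3)) c ^ 2 * e2 -
        (dist (p (m + 2)) (p (m + 3)) ^ 2 + dist (p (m + 3)) c ^ 2 * (2 - 2 * r)) * eb
    -- the recurrence for Frec
    have hFs : Frec (m + 1) (fun i => dist (p i) (p (i + 1)) ^ 2 / (4 * dist (p (i + 1)) (p (i + 2)) ^ 2)) =
        Frec m (fun i => dist (p i) (p (i + 1)) ^ 2 / (4 * dist (p (i + 1)) (p (i + 2)) ^ 2)) *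
          dist (p (m + 3)) c ^ 2 / dist (p (m + 2)) (p (m + 3)) ^ 2 := by
      rw [Frec_succ]
      simp only [show m + 1 + 1 = m + 2 from rfl, show m + 1 + 2 = m + 3 from rfl]
      field_simp
      linear_combination 4 * hFeq +
        (4 * Frec m (fun i => dist (p i) (p (i + 1)) ^ 2 / (4 * dist (p (i + 1)) (p (i + 2)) ^ 2)) *
          1) * hB2
    simp only [show m + 1 + 1 = m + 2 from rfl, show m + 1 + 2 = m + 3 from rfl,
      Nat.add_sub_cancel]
    constructor
    · rw [hFs]
      exact div_pos (mul_pos hFpos hh2pos) hBpos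
    · rw [hFs]
      field_simp
      linear_combination hkey

/-- Let `n ≥ 2` and `p_1, ..., p_n ∈ ℝ^d` in good position, with `b_i = |p_i - p_{i+1}|`
and `a_i = b_i²/(4 b_{i+1}²)`. Let `R_n` be the circumradius of `p_1, ..., p_n`
(the radius of the unique `(n-2)`-sphere through them in their affine span, whose
center `Q` lies in the affine span).  Then
`R_n² = (b_{n-1}²/4) · F^{(n-3)}(a_1,...,a_{n-3}) / F^{(n-2)}(a_1,...,a_{n-2})`,
which is the closed form of the continued fraction
`R_n² = (b_{n-1}²/4) / (1 - a_{n-2}/(1 - a_{n-3}/(⋯ - a_2/(1 - a_1))))`. -/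
theorem circumradius_formula (d n : ℕ) (hn : 2 ≤ n)
    (p : ℕ → EuclideanSpace ℝ (Fin d))
    (hgood : GoodPosition p 1 n)
    (Q : EuclideanSpace ℝ (Fin d)) (R : ℝ)
    (hQ : Q ∈ affineSpan ℝ (p '' Set.Icc 1 n))
    (hR : ∀ i, 1 ≤ i → i ≤ n → dist Q (p i) = R) :
    R ^ 2 = (dist (p (n - 1)) (p n)) ^ 2 / 4 *
      Frec (n - 3) (fun i => dist (p i) (p (i + 1)) ^ 2 / (4 * dist (p (i + 1)) (p (i + 2)) ^ 2)) /
      Frec (n - 2) (fun i => dist (p i) (p (i + 1)) ^ 2 / (4 * dist (p (i + 1)) (p (i + 2)) ^ 2)) := by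
  obtain ⟨m, rfl⟩ : ∃ m, n = m + 2 := ⟨n - 2, by omega⟩
  obtain ⟨hpos, heq⟩ := key m p Q R hgood hQ hR
  simp only [show m + 2 - 1 = m + 1 from by omega, show m + 2 - 3 = m - 1 from by omega,
    show m + 2 - 2 = m from by omega]
  rw [eq_div_iff (ne_of_gt hpos)]
  exact heq
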